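/- For any positive semidefinite matrix A ∈ M_n(ℂ), the sum of diagonal products over odd permutations is nonnegative: Σ_{σ ∈ O_n} ∏_{i=1}^n A_{i,σ(i)} ≥ 0, where O_n is the set of odd permutations of S_n. Equivalently, Σ_{σ ∈ A_n} ∏_{i=1}^n A_{i,σ(i)} ≤ per(A), i.e. d^{A_n}_1(A) ≤ per(A). -/

import Mathlib

open scoped ComplexOrder

namespace SchurAux

open Finset Equiv

variable {m : ℕ}

noncomputable def Q {n : ℕ} (v : Fin n → EuclideanSpace ℂ (Fin m)) (f : Fin n → Fin m) : ℂ :=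
  ∑ σ : Equiv.Perm (Fin n), ∏ i, v (σ i) (f i)

lemma perSum_expand {n : ℕ} (v : Fin n → EuclideanSpace ℂ (Fin m)) :
    (∑ σ : Equiv.Perm (Fin n), ∏ i, (inner ℂ (v i) (v (σ i)) : ℂ))
      = ∑ f : Fin n → Fin m, (starRingEnd ℂ) (∏ i, v i (f i)) * Q v f := by
  have h1 : ∀ σ : Equiv.Perm (Fin n), (∏ i, (inner ℂ (v i) (v (σ i)) : ℂ))
      = ∑ f : Fin n → Fin m, ∏ i, (starRingEnd ℂ) (v i (f i)) * v (σ i) (f i) := by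
    intro σ
    simp only [PiLp.inner_apply, RCLike.inner_apply]
    rw [Finset.prod_univ_sum, Fintype.piFinset_univ]
    exact Finset.sum_congr rfl fun f _ => Finset.prod_congr rfl fun i _ => mul_comm _ _
  rw [Finset.sum_congr rfl (fun σ _ => h1 σ), Finset.sum_comm]
  refine Finset.sum_congr rfl fun f _ => ?_
  rw [Q, Finset.mul_sum]
  exact Finset.sum_congr rfl fun σ _ => by rw [Finset.prod_mul_distrib, map_prod]

lemma Q_comp_perm {n : ℕ} (v : Fin n → EuclideanSpace ℂ (Fin m)) (f : Fin n → Fin m)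
    (π : Equiv.Perm (Fin n)) : Q v (f ∘ π) = Q v f := by
  unfold Q
  have h : ∀ σ : Equiv.Perm (Fin n), ∏ i, v (σ i) ((f ∘ π) i)
      = ∏ j, v ((σ * π⁻¹) j) (f j) := by
    intro σ
    rw [← Equiv.prod_comp π (fun j => v ((σ * π⁻¹) j) (f j))]
    simp [Equiv.Perm.mul_apply]
  rw [Finset.sum_congr rfl (fun σ _ => h σ)]
  exact Fintype.sum_equiv (Equiv.mulRight π⁻¹) _ _ (fun σ => rfl)

lemma sum_P_comp {n : ℕ} (v : Fin n → EuclideanSpace ℂ (Fin m)) (f : Fin n → Fin m) :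
    ∑ π : Equiv.Perm (Fin n), ∏ i, v i ((f ∘ π) i) = Q v f := by
  have h : ∀ π : Equiv.Perm (Fin n), ∏ i, v i ((f ∘ π) i) = ∏ j, v (π⁻¹ j) (f j) := by
    intro π
    rw [← Equiv.prod_comp π (fun j => v (π⁻¹ j) (f j))]
    simp
  rw [Finset.sum_congr rfl (fun π _ => h π)]
  exact Fintype.sum_equiv (Equiv.inv (Equiv.Perm (Fin n))) _ _ (fun π => rfl)

lemma perSum_nonneg {n : ℕ} (v : Fin n → EuclideanSpace ℂ (Fin m)) :
    0 ≤ ∑ σ : Equiv.Perm (Fin n), ∏ i, (inner ℂ (v i) (v (σ i)) : ℂ) := by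
  set S := ∑ σ : Equiv.Perm (Fin n), ∏ i, (inner ℂ (v i) (v (σ i)) : ℂ) with hS
  have key : (n.factorial : ℂ) * S = ∑ f : Fin n → Fin m, (starRingEnd ℂ) (Q v f) * Q v f := by
    have hconst : (n.factorial : ℂ) * S = ∑ _π : Equiv.Perm (Fin n), S := by
      rw [Finset.sum_const, card_univ, Fintype.card_perm, Fintype.card_fin, nsmul_eq_mul]
    rw [hconst]
    have hreindex : ∀ π : Equiv.Perm (Fin n),
        S = ∑ f : Fin n → Fin m, (starRingEnd ℂ) (∏ i, v i ((f ∘ π) i)) * Q v (f ∘ π) := by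
      intro π
      rw [hS, perSum_expand]
      have hb : Function.Bijective (fun f : Fin n → Fin m => f ∘ ⇑π.symm) := by
        constructor
        · intro f g h
          funext x
          simpa using congrFun h (π x)
        · intro g
          exact ⟨g ∘ ⇑π, by funext x; simp⟩
      refine Fintype.sum_bijective _ hb _ _ (fun f => ?_)
      have hfix : (f ∘ ⇑π.symm) ∘ ⇑π = f := by funext x; simp
      rw [hfix]
    rw [Finset.sum_congr rfl (fun π _ => hreindex π), Finset.sum_comm]
    refine Finset.sum_congr rfl fun f _ => ?_
    calc ∑ π : Equiv.Perm (Fin n), (starRingEnd ℂ) (∏ i, v i ((f ∘ π) i)) * Q v (f ∘ π)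
        = ∑ π : Equiv.Perm (Fin n), (starRingEnd ℂ) (∏ i, v i ((f ∘ π) i)) * Q v f :=
          Finset.sum_congr rfl fun π _ => by rw [Q_comp_perm]
      _ = (starRingEnd ℂ) (∑ π : Equiv.Perm (Fin n), ∏ i, v i ((f ∘ π) i)) * Q v f := by
          rw [← Finset.sum_mul, map_sum]
      _ = (starRingEnd ℂ) (Q v f) * Q v f := by rw [sum_P_comp]
  have hnn : 0 ≤ (n.factorial : ℂ) * S := by
    rw [key]
    refine Finset.sum_nonneg fun f _ => ?_
    rw [starRingEnd_apply]
    exact star_mul_self_nonneg _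
  have hfac : (0:ℂ) ≤ (n.factorial : ℂ)⁻¹ := by
    have hcast : ((n.factorial:ℝ):ℂ) = (n.factorial:ℂ) := by norm_cast
    rw [← hcast, ← Complex.ofReal_inv]
    exact Complex.zero_le_real.2 (by positivity)
  have hrw : S = (n.factorial : ℂ)⁻¹ * ((n.factorial : ℂ) * S) := by
    rw [← mul_assoc, inv_mul_cancel₀ (by exact_mod_cast Nat.factorial_ne_zero n), one_mul]
  rw [hrw]
  exact mul_nonneg hfac hnn

lemma oddSum_nonneg_of_dep {n : ℕ} (u : Fin (n+1) → EuclideanSpace ℂ (Fin m))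
    (hdep : u 0 ∈ Submodule.span ℂ (Set.range (u ∘ Fin.succ))) :
    0 ≤ ∑ σ ∈ Finset.univ.filter (fun σ : Equiv.Perm (Fin (n+1)) => Equiv.Perm.sign σ = -1),
        ∏ i, (inner ℂ (u i) (u (σ i)) : ℂ) := by
  classical
  set t : Equiv.Perm (Fin (n+1)) → ℂ := fun σ => ∏ i, (inner ℂ (u i) (u (σ i)) : ℂ) with ht
  -- Gram matrix (transposed)
  set M : Matrix (Fin (n+1)) (Fin (n+1)) ℂ := Matrix.of fun i j => (inner ℂ (u j) (u i) : ℂ) with hM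
  obtain ⟨c, hc⟩ := Submodule.mem_span_range_iff_exists_fun ℂ |>.mp hdep
  -- row dependence
  have hM0 : M 0 = ∑ k : Fin (n+1), (Fin.cases 0 c : Fin (n+1) → ℂ) k • M k := by
    rw [Fin.sum_univ_succ]
    simp only [Fin.cases_zero, Fin.cases_succ, zero_smul, zero_add]
    funext i
    have : (inner ℂ (u i) (u 0) : ℂ) = inner ℂ (u i) (∑ j, c j • (u ∘ Fin.succ) j) := by rw [hc]
    simp only [Finset.sum_apply, Pi.smul_apply, smul_eq_mul]
    rw [hM]
    simp only [Matrix.of_apply]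
    rw [this, inner_sum]
    simp [inner_smul_right]
  have hdet : M.det = 0 := by
    conv_lhs => rw [← Matrix.updateRow_eq_self M 0, hM0]
    rw [Matrix.det_updateRow_sum]
    simp
  -- det as signed sum
  have hdet' : (∑ σ ∈ Finset.univ.filter (fun σ : Equiv.Perm (Fin (n+1)) => Equiv.Perm.sign σ = 1), t σ)
      - (∑ σ ∈ Finset.univ.filter (fun σ : Equiv.Perm (Fin (n+1)) => Equiv.Perm.sign σ = -1), t σ) = 0 := by
    have h1 : M.det = ∑ σ : Equiv.Perm (Fin (n+1)), ((Equiv.Perm.sign σ : ℤ) : ℂ) * t σ := by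
      rw [Matrix.det_apply']
      refine Finset.sum_congr rfl fun σ _ => ?_
      congr 1
    rw [hdet] at h1
    rw [← Finset.sum_filter_add_sum_filter_not Finset.univ
      (fun σ : Equiv.Perm (Fin (n+1)) => Equiv.Perm.sign σ = 1)] at h1
    have he : ∀ σ ∈ Finset.univ.filter (fun σ : Equiv.Perm (Fin (n+1)) => Equiv.Perm.sign σ = 1),
        ((Equiv.Perm.sign σ : ℤ) : ℂ) * t σ = t σ := by
      intro σ hσ
      rw [Finset.mem_filter] at hσ
      rw [hσ.2]; simp
    have ho : ∀ σ ∈ Finset.univ.filter (fun σ : Equiv.Perm (Fin (n+1)) => ¬ Equiv.Perm.sign σ = 1),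
        ((Equiv.Perm.sign σ : ℤ) : ℂ) * t σ = - t σ := by
      intro σ hσ
      rw [Finset.mem_filter] at hσ
      rw [Int.units_ne_iff_eq_neg.mp hσ.2]; simp
    rw [Finset.sum_congr rfl he, Finset.sum_congr rfl ho, Finset.sum_neg_distrib] at h1
    have hfilt : (Finset.univ.filter (fun σ : Equiv.Perm (Fin (n+1)) => ¬ Equiv.Perm.sign σ = 1))
        = Finset.univ.filter (fun σ : Equiv.Perm (Fin (n+1)) => Equiv.Perm.sign σ = -1) := by
      apply Finset.filter_congr
      intro σ _
      simp [Int.units_ne_iff_eq_neg]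
    rw [hfilt] at h1
    linear_combination -h1
  have hper : (∑ σ ∈ Finset.univ.filter (fun σ : Equiv.Perm (Fin (n+1)) => Equiv.Perm.sign σ = 1), t σ)
      + (∑ σ ∈ Finset.univ.filter (fun σ : Equiv.Perm (Fin (n+1)) => Equiv.Perm.sign σ = -1), t σ)
      = ∑ σ : Equiv.Perm (Fin (n+1)), t σ := by
    rw [← Finset.sum_filter_add_sum_filter_not Finset.univ
      (fun σ : Equiv.Perm (Fin (n+1)) => Equiv.Perm.sign σ = 1) t]
    congr 1
    apply Finset.sum_congr _ (fun _ _ => rfl)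
    apply Finset.filter_congr
    intro σ _
    simp [Int.units_ne_iff_eq_neg]
  have hPnn : 0 ≤ ∑ σ : Equiv.Perm (Fin (n+1)), t σ := perSum_nonneg u
  -- 2 * odd = per
  have h2 : (2:ℂ) * (∑ σ ∈ Finset.univ.filter (fun σ : Equiv.Perm (Fin (n+1)) => Equiv.Perm.sign σ = -1), t σ)
      = ∑ σ : Equiv.Perm (Fin (n+1)), t σ := by linear_combination hper - hdet'
  have hhalf : (0:ℂ) ≤ (2:ℂ)⁻¹ := by
    rw [show ((2:ℂ))⁻¹ = ((2⁻¹ : ℝ) : ℂ) by norm_num]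
    exact Complex.zero_le_real.2 (by norm_num)
  calc (0:ℂ) ≤ (2:ℂ)⁻¹ * ((2:ℂ) * (∑ σ ∈ Finset.univ.filter
        (fun σ : Equiv.Perm (Fin (n+1)) => Equiv.Perm.sign σ = -1), t σ)) := by
        rw [h2]; exact mul_nonneg hhalf hPnn
    _ = _ := by rw [← mul_assoc, inv_mul_cancel₀ two_ne_zero, one_mul]

lemma oddSum_nonneg : ∀ (n : ℕ) (v : Fin n → EuclideanSpace ℂ (Fin m)),
    0 ≤ ∑ σ ∈ Finset.univ.filter (fun σ : Equiv.Perm (Fin n) => Equiv.Perm.sign σ = -1),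
        ∏ i, (inner ℂ (v i) (v (σ i)) : ℂ) := by
  intro n
  induction n with
  | zero =>
    intro v
    rw [Finset.filter_false_of_mem, Finset.sum_empty]
    · intro σ _
      rw [Subsingleton.elim σ 1]
      simp
  | succ n ih =>
    intro v
    classical
    set K := Submodule.span ℂ (Set.range (v ∘ Fin.succ)) with hK
    haveI : FiniteDimensional ℂ K := FiniteDimensional.span_of_finite ℂ (Set.finite_range _)
    set p : EuclideanSpace ℂ (Fin m) := (K.orthogonalProjectionOnto (v 0) : EuclideanSpace ℂ (Fin m)) with hp
    set w : EuclideanSpace ℂ (Fin m) := v 0 - p with hww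
    have hpK : p ∈ K := Submodule.coe_mem _
    have hwKperp : w ∈ Kᗮ := Submodule.sub_starProjection_mem_orthogonal (K := K) (v 0)
    have horth : ∀ x ∈ K, (inner ℂ x w : ℂ) = 0 :=
      fun x hx => (Submodule.mem_orthogonal K w).mp hwKperp x hx
    have horth' : ∀ x ∈ K, (inner ℂ w x : ℂ) = 0 := fun x hx => by
      rw [← inner_conj_symm, horth x hx, map_zero]
    have hv0 : v 0 = p + w := by rw [hww]; abel
    have hvK : ∀ b : Fin (n+1), b ≠ 0 → v b ∈ K := by
      intro b hb
      obtain ⟨k, hk⟩ := Fin.exists_succ_eq_of_ne_zero hb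
      rw [← hk]
      exact Submodule.subset_span ⟨k, rfl⟩
    set u' : Fin (n+1) → EuclideanSpace ℂ (Fin m) := Function.update v 0 p with hu'
    set u'' : Fin (n+1) → EuclideanSpace ℂ (Fin m) := Function.update v 0 w with hu''
    -- zero lemma for u'' when σ 0 ≠ 0
    have hu''zero : ∀ σ : Equiv.Perm (Fin (n+1)), σ 0 ≠ 0 →
        (∏ i, (inner ℂ (u'' i) (u'' (σ i)) : ℂ)) = 0 := by
      intro σ h0
      have ha : σ⁻¹ 0 ≠ 0 := fun h =>
        h0 ((congrArg σ h).symm.trans (Equiv.apply_symm_apply σ 0))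
      refine Finset.prod_eq_zero (Finset.mem_univ (σ⁻¹ 0)) ?_
      rw [show σ (σ⁻¹ 0) = 0 from Equiv.apply_symm_apply σ 0]
      rw [hu'', Function.update_of_ne ha, Function.update_self]
      exact horth _ (hvK _ ha)
    -- splitting lemma
    have hsplit : ∀ σ : Equiv.Perm (Fin (n+1)),
        (∏ i, (inner ℂ (v i) (v (σ i)) : ℂ))
          = (∏ i, (inner ℂ (u' i) (u' (σ i)) : ℂ)) + ∏ i, (inner ℂ (u'' i) (u'' (σ i)) : ℂ) := by
      intro σ
      by_cases h0 : σ 0 = 0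
      · have hts : ∀ i : Fin n, σ i.succ ≠ 0 := by
          intro i h
          exact (Fin.succ_ne_zero i) (σ.injective (h.trans h0.symm))
        rw [Fin.prod_univ_succ, Fin.prod_univ_succ, Fin.prod_univ_succ, h0]
        have htail : ∀ i : Fin n,
            (inner ℂ (u' i.succ) (u' (σ i.succ)) : ℂ) = inner ℂ (v i.succ) (v (σ i.succ)) := by
          intro i
          rw [hu', Function.update_of_ne (Fin.succ_ne_zero i), Function.update_of_ne (hts i)]
        have htail' : ∀ i : Fin n,
            (inner ℂ (u'' i.succ) (u'' (σ i.succ)) : ℂ) = inner ℂ (v i.succ) (v (σ i.succ)) := by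
          intro i
          rw [hu'', Function.update_of_ne (Fin.succ_ne_zero i), Function.update_of_ne (hts i)]
        rw [Finset.prod_congr rfl (fun i _ => htail i), Finset.prod_congr rfl (fun i _ => htail' i)]
        have hhead : (inner ℂ (v 0) (v 0) : ℂ) = inner ℂ (u' 0) (u' 0) + inner ℂ (u'' 0) (u'' 0) := by
          rw [hu', hu'', Function.update_self, Function.update_self, hv0]
          rw [inner_add_left, inner_add_right, inner_add_right]
          rw [horth p hpK, horth' p hpK]
          ring
        rw [hhead]
        ring
      · rw [hu''zero σ h0, add_zero]
        refine Finset.prod_congr rfl fun i _ => ?_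
        by_cases hi : i = 0
        · subst hi
          rw [hu', Function.update_self, Function.update_of_ne h0, hv0, inner_add_left,
            horth' _ (hvK _ h0), add_zero]
        · by_cases hsi : σ i = 0
          · rw [hu', Function.update_of_ne hi, hsi, Function.update_self, hv0, inner_add_right,
              horth _ (hvK _ hi), add_zero]
          · rw [hu', Function.update_of_ne hi, Function.update_of_ne hsi]
    rw [Finset.sum_congr rfl (fun σ _ => hsplit σ), Finset.sum_add_distrib]
    have hpart1 : 0 ≤ ∑ σ ∈ Finset.univ.filter
        (fun σ : Equiv.Perm (Fin (n+1)) => Equiv.Perm.sign σ = -1),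
        ∏ i, (inner ℂ (u' i) (u' (σ i)) : ℂ) := by
      apply oddSum_nonneg_of_dep
      have h1 : u' ∘ Fin.succ = v ∘ Fin.succ := by
        funext i
        exact Function.update_of_ne (Fin.succ_ne_zero i) _ _
      rw [show u' 0 = p by rw [hu']; simp, h1]
      exact hpK
    have hdf : ∀ σ : Equiv.Perm (Fin (n+1)), σ 0 = 0 →
        Equiv.Perm.decomposeFin.symm (0, (Equiv.Perm.decomposeFin σ).2) = σ := by
      intro σ h00
      have h1 : Equiv.Perm.decomposeFin.symm (Equiv.Perm.decomposeFin σ) = σ :=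
        Equiv.symm_apply_apply _ _
      have h3 : σ 0 = (Equiv.Perm.decomposeFin σ).1 := by
        have h2 := Equiv.Perm.decomposeFin_symm_apply_zero
          (Equiv.Perm.decomposeFin σ).1 (Equiv.Perm.decomposeFin σ).2
        rw [Prod.mk.eta, h1] at h2
        exact h2
      have h2 : (Equiv.Perm.decomposeFin σ).1 = 0 := by rw [← h3, h00]
      rw [← h2, Prod.mk.eta]
      exact h1
    have hsgn0 : ∀ τ : Equiv.Perm (Fin n),
        Equiv.Perm.sign (Equiv.Perm.decomposeFin.symm ((0 : Fin (n+1)), τ))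
          = Equiv.Perm.sign τ := by
      intro τ
      simp [Equiv.Perm.decomposeFin.symm_sign]
    have hval : ∀ τ : Equiv.Perm (Fin n),
        (∏ i, (inner ℂ (u'' i) (u'' ((Equiv.Perm.decomposeFin.symm ((0 : Fin (n+1)), τ)) i)) : ℂ))
          = (inner ℂ w w : ℂ) * ∏ i, (inner ℂ ((v ∘ Fin.succ) i) ((v ∘ Fin.succ) (τ i)) : ℂ) := by
      intro τ
      rw [Fin.prod_univ_succ]
      have hhead : (inner ℂ (u'' 0)
          (u'' ((Equiv.Perm.decomposeFin.symm ((0:Fin (n+1)), τ)) 0)) : ℂ) = inner ℂ w w := by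
        rw [Equiv.Perm.decomposeFin_symm_apply_zero]
        simp [hu'']
      have htail : ∀ i : Fin n, (inner ℂ (u'' i.succ)
          (u'' ((Equiv.Perm.decomposeFin.symm ((0:Fin (n+1)), τ)) i.succ)) : ℂ)
          = inner ℂ ((v ∘ Fin.succ) i) ((v ∘ Fin.succ) (τ i)) := by
        intro i
        rw [Equiv.Perm.decomposeFin_symm_apply_succ, Equiv.swap_self, Equiv.refl_apply]
        rw [hu'', Function.update_of_ne (Fin.succ_ne_zero i),
          Function.update_of_ne (Fin.succ_ne_zero (τ i))]
        rfl
      rw [hhead, Finset.prod_congr rfl (fun i _ => htail i)]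
    have hpart2 : 0 ≤ ∑ σ ∈ Finset.univ.filter
        (fun σ : Equiv.Perm (Fin (n+1)) => Equiv.Perm.sign σ = -1),
        ∏ i, (inner ℂ (u'' i) (u'' (σ i)) : ℂ) := by
      rw [← Finset.sum_filter_add_sum_filter_not
        (Finset.univ.filter (fun σ : Equiv.Perm (Fin (n+1)) => Equiv.Perm.sign σ = -1))
        (fun σ => σ 0 = 0)]
      have hz : ∑ σ ∈ (Finset.univ.filter
          (fun σ : Equiv.Perm (Fin (n+1)) => Equiv.Perm.sign σ = -1)).filter
          (fun σ => ¬ σ 0 = 0), ∏ i, (inner ℂ (u'' i) (u'' (σ i)) : ℂ) = 0 := by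
        refine Finset.sum_eq_zero fun σ hσ => ?_
        rw [Finset.mem_filter] at hσ
        exact hu''zero σ hσ.2
      rw [hz, add_zero]
      have hbij : ∑ σ ∈ (Finset.univ.filter
          (fun σ : Equiv.Perm (Fin (n+1)) => Equiv.Perm.sign σ = -1)).filter (fun σ => σ 0 = 0),
          ∏ i, (inner ℂ (u'' i) (u'' (σ i)) : ℂ)
        = ∑ τ ∈ Finset.univ.filter (fun τ : Equiv.Perm (Fin n) => Equiv.Perm.sign τ = -1),
          (inner ℂ w w : ℂ) * ∏ i, (inner ℂ ((v ∘ Fin.succ) i) ((v ∘ Fin.succ) (τ i)) : ℂ) := by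
        refine Finset.sum_nbij' (fun σ => (Equiv.Perm.decomposeFin σ).2)
          (fun τ => Equiv.Perm.decomposeFin.symm (0, τ)) ?_ ?_ ?_ ?_ ?_
        · intro σ hσ
          rw [Finset.mem_filter, Finset.mem_filter] at hσ
          obtain ⟨⟨-, hsgn⟩, h00⟩ := hσ
          rw [Finset.mem_filter]
          refine ⟨Finset.mem_univ _, ?_⟩
          have := hsgn0 (Equiv.Perm.decomposeFin σ).2
          rw [hdf σ h00] at this
          rw [← this, hsgn]
        · intro τ hτ
          rw [Finset.mem_filter] at hτ
          rw [Finset.mem_filter, Finset.mem_filter]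
          exact ⟨⟨Finset.mem_univ _, by rw [hsgn0, hτ.2]⟩,
            Equiv.Perm.decomposeFin_symm_apply_zero 0 τ⟩
        · intro σ hσ
          rw [Finset.mem_filter, Finset.mem_filter] at hσ
          exact hdf σ hσ.2
        · intro τ hτ
          show (Equiv.Perm.decomposeFin (Equiv.Perm.decomposeFin.symm (0, τ))).2 = τ
          rw [Equiv.apply_symm_apply]
        · intro σ hσ
          rw [Finset.mem_filter, Finset.mem_filter] at hσ
          conv_lhs => rw [← hdf σ hσ.2]
          exact hval (Equiv.Perm.decomposeFin σ).2
      rw [hbij, ← Finset.mul_sum]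
      refine mul_nonneg ?_ (ih (v ∘ Fin.succ))
      rw [inner_self_eq_norm_sq_to_K, ← RCLike.ofReal_pow]
      exact RCLike.ofReal_nonneg.2 (sq_nonneg _)
    exact add_nonneg hpart1 hpart2

end SchurAux

/-- For a positive semidefinite `A ∈ M_n(ℂ)`, the sum of diagonal products over odd
permutations is nonnegative; equivalently, `d^{Aₙ}_1(A) ≤ per(A)`. -/
theorem stmt_5 {n : ℕ} (A : Matrix (Fin n) (Fin n) ℂ) (hA : A.PosSemidef) :
    0 ≤ (∑ σ ∈ Finset.univ.filter (fun σ : Equiv.Perm (Fin n) => Equiv.Perm.sign σ = -1),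
        ∏ i, A i (σ i)) ∧
    (∑ σ ∈ Finset.univ.filter (fun σ : Equiv.Perm (Fin n) => Equiv.Perm.sign σ = 1),
        ∏ i, A i (σ i)) ≤ ∑ σ : Equiv.Perm (Fin n), ∏ i, A i (σ i) := by
  classical
  obtain ⟨B, hB⟩ : ∃ B : Matrix (Fin n) (Fin n) ℂ, A = B.conjTranspose * B := by
    open scoped MatrixOrder Matrix.Norms.L2Operator in
    exact CStarAlgebra.nonneg_iff_eq_star_mul_self.mp hA.nonneg
  set v : Fin n → EuclideanSpace ℂ (Fin n) := fun i => WithLp.toLp 2 (fun k => B k i) with hv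
  have hAv : ∀ i j, A i j = (inner ℂ (v i) (v j) : ℂ) := by
    intro i j
    rw [hB]
    simp [Matrix.mul_apply, PiLp.inner_apply, RCLike.inner_apply,
      Matrix.conjTranspose_apply, hv, mul_comm]
  have hodd : 0 ≤ ∑ σ ∈ Finset.univ.filter
      (fun σ : Equiv.Perm (Fin n) => Equiv.Perm.sign σ = -1), ∏ i, A i (σ i) := by
    have := SchurAux.oddSum_nonneg n v
    convert this using 2 with σ hσ
    exact Finset.prod_congr rfl fun i _ => hAv i (σ i)
  refine ⟨hodd, ?_⟩
  rw [← Finset.sum_filter_add_sum_filter_not Finset.univ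
    (fun σ : Equiv.Perm (Fin n) => Equiv.Perm.sign σ = 1)
    (fun σ => ∏ i, A i (σ i))]
  have hfilt : (Finset.univ.filter (fun σ : Equiv.Perm (Fin n) => ¬ Equiv.Perm.sign σ = 1))
      = Finset.univ.filter (fun σ : Equiv.Perm (Fin n) => Equiv.Perm.sign σ = -1) := by
    apply Finset.filter_congr
    intro σ _
    simp [Int.units_ne_iff_eq_neg]
  rw [hfilt]
  exact le_add_of_nonneg_right hodd
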